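/- If the eigenvalues of a symmetric positive definite matrix G all lie in the open interval (0, 3), then the Newton–Schulz iteration G_{m+1} = C_m G_m C_m with C_m = (3/2)I - (1/2)G_m converges to the identity matrix. -/

import Mathlib

open Filter

/-- The Newton–Schulz scalar map. -/
noncomputable def nsF (x : ℝ) : ℝ := (3/2 - x/2) * x * (3/2 - x/2)

lemma nsF_one_sub (x : ℝ) : 1 - nsF x = (1 - x)^2 * (4 - x) / 4 := by
  unfold nsF; ring

lemma nsF_iter_tendsto {x : ℝ} (hx : x ∈ Set.Ioo (0:ℝ) 3) :
    Tendsto (fun m => nsF^[m] x) atTop (nhds 1) := by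
  obtain ⟨hx0, hx3⟩ := hx
  set y := nsF x with hy
  have hy_pos : 0 < y := by
    have h32 : 0 < 3/2 - x/2 := by linarith
    rw [hy]; unfold nsF
    exact mul_pos (mul_pos h32 hx0) h32
  have hy_le : 0 ≤ 1 - y := by
    rw [hy, nsF_one_sub]
    have h1 : (0:ℝ) ≤ (1-x)^2 * (4-x) := mul_nonneg (sq_nonneg _) (by linarith)
    linarith
  set q := 1 - y with hq
  have hq0 : 0 ≤ q := hy_le
  have hq1 : q < 1 := by rw [hq]; linarith
  have key : ∀ m, 0 ≤ 1 - nsF^[m] y ∧ 1 - nsF^[m] y ≤ q ^ (m+1) := by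
    intro m
    induction m with
    | zero =>
      simp only [Function.iterate_zero, id_eq, zero_add, pow_one]
      exact ⟨hq0, le_of_eq hq.symm⟩
    | succ m ih =>
      obtain ⟨h1, h2⟩ := ih
      set z := nsF^[m] y with hz
      have hz1 : z ≤ 1 := by linarith
      have hzq : 1 - z ≤ q := le_trans h2 (by
        calc q ^ (m+1) ≤ q ^ 1 := pow_le_pow_of_le_one hq0 hq1.le (by omega)
        _ = q := pow_one q)
      have hform : 1 - nsF^[m+1] y = (1 - z)^2 * (4 - z) / 4 := by
        rw [Function.iterate_succ_apply', ← hz, nsF_one_sub]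
      constructor
      · rw [hform]
        have h4 : (0:ℝ) ≤ 4 - z := by linarith
        positivity
      · rw [hform]
        calc (1 - z)^2 * (4 - z) / 4 ≤ (1 - z)^2 := by nlinarith [sq_nonneg (1-z)]
        _ = (1 - z) * (1 - z) := by ring
        _ ≤ q ^ (m+1) * q := mul_le_mul h2 hzq h1 (pow_nonneg hq0 _)
        _ = q ^ (m+1+1) := by ring
  have hsq : Tendsto (fun m => nsF^[m] y) atTop (nhds 1) := by
    have hg : Tendsto (fun m : ℕ => q ^ (m+1)) atTop (nhds 0) :=
      (tendsto_add_atTop_iff_nat 1).mpr (tendsto_pow_atTop_nhds_zero_of_lt_one hq0 hq1)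
    have h0 : Tendsto (fun m => 1 - nsF^[m] y) atTop (nhds 0) :=
      squeeze_zero (fun m => (key m).1) (fun m => (key m).2) hg
    have h2 : Tendsto (fun m => 1 - (1 - nsF^[m] y)) atTop (nhds (1 - 0)) :=
      tendsto_const_nhds.sub h0
    simpa using h2
  have hshift : Tendsto (fun m => nsF^[m+1] x) atTop (nhds 1) := by
    refine hsq.congr (fun m => ?_)
    rw [Function.iterate_succ_apply, ← hy]
  exact (tendsto_add_atTop_iff_nat 1).mp hshift

/-- Newton–Schulz iteration on a symmetric positive definite matrix with
eigenvalues in `(0, 3)` converges to the identity. -/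
theorem newton_schulz_converges {K : ℕ} (G : Matrix (Fin K) (Fin K) ℝ)
    (hsym : G.IsSymm) (hpd : G.PosDef)
    (heig : ∀ μ ∈ spectrum ℝ G, μ ∈ Set.Ioo (0 : ℝ) 3)
    (Gs : ℕ → Matrix (Fin K) (Fin K) ℝ)
    (h0 : Gs 0 = G)
    (hrec : ∀ m, Gs (m + 1) =
      ((3/2 : ℝ) • (1 : Matrix (Fin K) (Fin K) ℝ) - (1/2 : ℝ) • Gs m) * Gs m *
      ((3/2 : ℝ) • (1 : Matrix (Fin K) (Fin K) ℝ) - (1/2 : ℝ) • Gs m)) :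
    Tendsto Gs atTop (nhds (1 : Matrix (Fin K) (Fin K) ℝ)) := by
  classical
  have hH : G.IsHermitian := hpd.1
  set U : Matrix (Fin K) (Fin K) ℝ := (hH.eigenvectorUnitary : Matrix (Fin K) (Fin K) ℝ) with hU
  set ev : Fin K → ℝ := hH.eigenvalues with hev
  have hUU : U * star U = 1 := Matrix.mem_unitaryGroup_iff.mp hH.eigenvectorUnitary.2
  have hUU' : star U * U = 1 := Matrix.mem_unitaryGroup_iff'.mp hH.eigenvectorUnitary.2
  have hclosed : ∀ m, Gs m = U * Matrix.diagonal (fun i => nsF^[m] (ev i)) * star U := by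
    intro m
    induction m with
    | zero =>
      simp only [Function.iterate_zero, id_eq]
      rw [h0]
      have hdiagfun : (RCLike.ofReal ∘ hH.eigenvalues : Fin K → ℝ) = fun i => ev i := by
        funext i
        simp [RCLike.ofReal_real_eq_id, hev]
      have := hH.spectral_theorem
      rw [hdiagfun] at this
      exact this
    | succ m ih =>
      rw [hrec m, ih]
      set D := Matrix.diagonal (fun i => nsF^[m] (ev i)) with hD
      have hC : (3/2 : ℝ) • (1 : Matrix (Fin K) (Fin K) ℝ) - (1/2 : ℝ) • (U * D * star U)
          = U * ((3/2 : ℝ) • 1 - (1/2 : ℝ) • D) * star U := by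
        rw [Matrix.mul_sub, Matrix.sub_mul, Matrix.mul_smul, Matrix.mul_smul,
          Matrix.smul_mul, Matrix.smul_mul, mul_one, hUU]
      rw [hC]
      have collapse : ∀ A B : Matrix (Fin K) (Fin K) ℝ,
          (U * A * star U) * (U * B * star U) = U * (A * B) * star U := by
        intro A B
        calc (U * A * star U) * (U * B * star U)
            = U * A * (star U * U) * B * star U := by
              simp only [Matrix.mul_assoc]
        _ = U * (A * B) * star U := by rw [hUU']; simp only [Matrix.mul_one, Matrix.mul_assoc]
      rw [collapse, collapse]
      have hdiag : (3/2 : ℝ) • (1 : Matrix (Fin K) (Fin K) ℝ) - (1/2 : ℝ) • D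
          = Matrix.diagonal (fun i => 3/2 - nsF^[m] (ev i) / 2) := by
        rw [hD]
        ext i j
        simp only [Matrix.sub_apply, Matrix.smul_apply, Matrix.one_apply,
          Matrix.diagonal_apply, smul_eq_mul]
        split_ifs <;> ring
      have hinner : ((3/2 : ℝ) • (1 : Matrix (Fin K) (Fin K) ℝ) - (1/2 : ℝ) • D) * D *
          ((3/2 : ℝ) • 1 - (1/2 : ℝ) • D)
          = Matrix.diagonal (fun i => nsF^[m+1] (ev i)) := by
        rw [hdiag, hD, Matrix.diagonal_mul_diagonal, Matrix.diagonal_mul_diagonal]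
        have hfun : (fun i => (3/2 - nsF^[m] (ev i) / 2) * nsF^[m] (ev i) *
            (3/2 - nsF^[m] (ev i) / 2)) = fun i => nsF^[m+1] (ev i) := by
          funext i
          rw [Function.iterate_succ_apply']
          unfold nsF
          ring
        rw [hfun]
      rw [hinner]
  have hev3 : ∀ i, ev i ∈ Set.Ioo (0:ℝ) 3 := fun i =>
    heig _ (hH.eigenvalues_mem_spectrum_real i)
  have hDlim : Tendsto (fun m => Matrix.diagonal (fun i => nsF^[m] (ev i)))
      atTop (nhds (1 : Matrix (Fin K) (Fin K) ℝ)) := by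
    have hpi : Tendsto (fun m => (fun i => nsF^[m] (ev i))) atTop
        (nhds (fun _ : Fin K => (1:ℝ))) := by
      rw [tendsto_pi_nhds]
      intro i
      exact nsF_iter_tendsto (hev3 i)
    have hcont : Continuous (Matrix.diagonal : (Fin K → ℝ) → Matrix (Fin K) (Fin K) ℝ) :=
      continuous_id.matrix_diagonal
    have := (hcont.tendsto (fun _ : Fin K => (1:ℝ))).comp hpi
    simpa [Matrix.diagonal_one, Function.comp_def] using this
  have hcontU : Continuous (fun A : Matrix (Fin K) (Fin K) ℝ => U * A * star U) :=
    (continuous_const.matrix_mul continuous_id).matrix_mul continuous_const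
  have hfinal := (hcontU.tendsto 1).comp hDlim
  have hGs : Gs = fun m => U * Matrix.diagonal (fun i => nsF^[m] (ev i)) * star U :=
    funext hclosed
  rw [hGs]
  simpa [Function.comp_def, mul_one, hUU] using hfinal
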